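/- Let r, θ be real numbers with 4.999 ≤ r ≤ 5 and 1 ≤ θ ≤ 2.13. Then the cubic q(x) = 1 − (r − θ)x + (r − 2θ)x² + θx³ has a real root in the open interval (0, 0.56) and a real root in the open interval (0.56, 1). -/
import Mathlib


/-- The cubic `q(x) = 1 - (r - θ)x + (r - 2θ)x² + θx³`. -/
def q (r θ x : ℝ) : ℝ :=
  1 - (r - θ) * x + (r - 2 * θ) * x ^ 2 + θ * x ^ 3

/-- For `4.999 ≤ r ≤ 5` and `1 ≤ θ ≤ 2.13`, the cubic `q` has a real root in
`(0, 0.56)` and a real root in `(0.56, 1)`. -/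
theorem roots_beta_gamma (r θ : ℝ) (hr1 : 4.999 ≤ r) (hr2 : r ≤ 5)
    (hθ1 : 1 ≤ θ) (hθ2 : θ ≤ 2.13) :
    (∃ γ : ℝ, 0 < γ ∧ γ < 0.56 ∧ q r θ γ = 0) ∧
    (∃ β : ℝ, 0.56 < β ∧ β < 1 ∧ q r θ β = 0) := by
  have hc : Continuous (q r θ) := by
    unfold q; continuity
  have h0 : q r θ 0 = 1 := by simp [q]
  have h56 : q r θ 0.56 < 0 := by
    unfold q; nlinarith
  have h1 : q r θ 1 = 1 := by unfold q; ring
  constructor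
  · have hsub := intermediate_value_Ioo' (by norm_num : (0:ℝ) ≤ 0.56)
      hc.continuousOn
    have : (0:ℝ) ∈ Set.Ioo (q r θ 0.56) (q r θ 0) := by
      constructor <;> simp [h0, h56]
    obtain ⟨x, hx, hqx⟩ := hsub this
    exact ⟨x, hx.1, hx.2, hqx⟩
  · have hsub := intermediate_value_Ioo (by norm_num : (0.56:ℝ) ≤ 1)
      hc.continuousOn
    have : (0:ℝ) ∈ Set.Ioo (q r θ 0.56) (q r θ 1) := by
      constructor <;> simp [h1, h56]
    obtain ⟨x, hx, hqx⟩ := hsub this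
    exact ⟨x, hx.1, hx.2, hqx⟩
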